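/- arXiv:quant-ph/0609040 — 4 statements merged into one kernel-verified Lean document; each statement's English description precedes it below -/
import Mathlib

section
/- Let H be a complex Hilbert space, γ > 0, σ ∈ ℝ and κ := γ/2 + iσ. Let E₀₀, E₁₁, E₁₀ be bounded operators on H with E₀₀ and E₁₁ self-adjoint, and set E₀₁ := E₁₀†. Assume T := 1 + iκE₁₁ is invertible in the algebra of bounded operators, and define L₁₁ := −iE₁₁T⁻¹, L₁₀ := −iT⁻¹E₁₀, L₀₁ := −iE₀₁T⁻¹, L₀₀ := −iE₀₀ − κE₀₁T⁻¹E₁₀. Then the Hudson–Parthasarathy unitarity (isometry) relations hold: L₀₀ + L₀₀† + γL₁₀†L₁₀ = 0, L₀₁ + L₁₀† + γL₁₀†L₁₁ = 0, L₁₀ + L₀₁† + γL₁₁†L₁₀ = 0, and L₁₁ + L₁₁† + γL₁₁†L₁₁ = 0. -/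
/-- (Paper, Theorem 1.) Let `H` be a complex Hilbert space, `γ > 0`,
`σ ∈ ℝ` and `κ := γ/2 + iσ`.  Let `E₀₀, E₁₁, E₁₀` be bounded operators on `H` with
`E₀₀`, `E₁₁` self-adjoint, set `E₀₁ := E₁₀†`, assume `T := 1 + iκ E₁₁` is invertible and
define `L₁₁ := -i E₁₁ T⁻¹`, `L₁₀ := -i T⁻¹ E₁₀`, `L₀₁ := -i E₀₁ T⁻¹`,
`L₀₀ := -i E₀₀ - κ E₀₁ T⁻¹ E₁₀`.  Then the Hudson–Parthasarathy isometry relations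
`L_ij + L_ji† + γ L_1i† L_1j = 0` hold. -/
theorem timeOrdered_to_normalOrdered_coefficients_satisfy_isometry_relations
    {H : Type*} [NormedAddCommGroup H] [InnerProductSpace ℂ H] [CompleteSpace H]
    (γ σ : ℝ) (hγ : 0 < γ) (κ : ℂ) (hκ : κ = γ / 2 + Complex.I * σ)
    (E₀₀ E₁₁ E₁₀ : H →L[ℂ] H)
    (hE₀₀ : ContinuousLinearMap.adjoint E₀₀ = E₀₀)
    (hE₁₁ : ContinuousLinearMap.adjoint E₁₁ = E₁₁)
    (E₀₁ : H →L[ℂ] H) (hE₀₁ : E₀₁ = ContinuousLinearMap.adjoint E₁₀)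
    (T : H →L[ℂ] H) (hT : T = 1 + (Complex.I * κ) • E₁₁) (hTinv : IsUnit T)
    (L₀₀ L₀₁ L₁₀ L₁₁ : H →L[ℂ] H)
    (hL₁₁ : L₁₁ = (-Complex.I) • (E₁₁ * Ring.inverse T))
    (hL₁₀ : L₁₀ = (-Complex.I) • (Ring.inverse T * E₁₀))
    (hL₀₁ : L₀₁ = (-Complex.I) • (E₀₁ * Ring.inverse T))
    (hL₀₀ : L₀₀ = (-Complex.I) • E₀₀ - κ • (E₀₁ * Ring.inverse T * E₁₀)) :
    L₀₀ + ContinuousLinearMap.adjoint L₀₀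
        + (γ : ℂ) • (ContinuousLinearMap.adjoint L₁₀ * L₁₀) = 0 ∧
    L₀₁ + ContinuousLinearMap.adjoint L₁₀
        + (γ : ℂ) • (ContinuousLinearMap.adjoint L₁₀ * L₁₁) = 0 ∧
    L₁₀ + ContinuousLinearMap.adjoint L₀₁
        + (γ : ℂ) • (ContinuousLinearMap.adjoint L₁₁ * L₁₀) = 0 ∧
    L₁₁ + ContinuousLinearMap.adjoint L₁₁
        + (γ : ℂ) • (ContinuousLinearMap.adjoint L₁₁ * L₁₁) = 0 := by
  set S : H →L[ℂ] H := Ring.inverse T with hSdef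
  have hγκ : κ + (starRingEnd ℂ) κ = (γ : ℂ) := by
    rw [hκ]
    have h : ((γ : ℂ) / 2 + Complex.I * σ) = Complex.mk (γ/2) σ := by
      apply Complex.ext <;> simp
    rw [h]
    simp [Complex.ext_iff, Complex.conj_re, Complex.conj_im]
  have hTS : T * S = 1 := Ring.mul_inverse_cancel T hTinv
  have hST : S * T = 1 := Ring.inverse_mul_cancel T hTinv
  have hstar11 : star E₁₁ = E₁₁ := by rw [ContinuousLinearMap.star_eq_adjoint, hE₁₁]
  have hstar00 : star E₀₀ = E₀₀ := by rw [ContinuousLinearMap.star_eq_adjoint, hE₀₀]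
  have hstar10 : star E₁₀ = E₀₁ := by rw [ContinuousLinearMap.star_eq_adjoint, ← hE₀₁]
  have hstar01 : star E₀₁ = E₁₀ := by rw [hE₀₁, ← ContinuousLinearMap.star_eq_adjoint, star_star]
  have hTS' : star T * star S = 1 := by rw [← star_mul, hST, star_one]
  have hST' : star S * star T = 1 := by rw [← star_mul, hTS, star_one]
  have hcancel : ∀ x : H →L[ℂ] H, star T * (star S * x) = x := fun x => by
    rw [← mul_assoc, hTS', one_mul]
  have hcancel2 : ∀ x : H →L[ℂ] H, star S * (star T * x) = x := fun x => by
    rw [← mul_assoc, hST', one_mul]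
  -- commutation of E₁₁ with S
  have hcT : T * E₁₁ = E₁₁ * T := by
    rw [hT]; simp only [add_mul, mul_add, one_mul, mul_one, smul_mul_assoc, mul_smul_comm]
  have hcomm : E₁₁ * S = S * E₁₁ := by
    calc E₁₁ * S = S * T * E₁₁ * S := by rw [hST, one_mul]
      _ = S * (T * E₁₁) * S := by rw [mul_assoc S T E₁₁]
      _ = S * (E₁₁ * T) * S := by rw [hcT]
      _ = S * E₁₁ * (T * S) := by simp only [mul_assoc]
      _ = S * E₁₁ := by rw [hTS, mul_one]
  have hcomm' : E₁₁ * star S = star S * E₁₁ := by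
    have h := congrArg star hcomm
    simp only [star_mul, hstar11] at h
    exact h.symm
  have hcP : ∀ x : H →L[ℂ] H, E₁₁ * (S * x) = S * (E₁₁ * x) := fun x => by
    rw [← mul_assoc, hcomm, mul_assoc]
  have hcP' : ∀ x : H →L[ℂ] H, E₁₁ * (star S * x) = star S * (E₁₁ * x) := fun x => by
    rw [← mul_assoc, hcomm', mul_assoc]
  -- key scalar-operator identities
  have hkeyN : (-Complex.I) • (star T) + Complex.I • T + (γ : ℂ) • E₁₁ = 0 := by
    rw [hT]
    simp only [star_add, star_one, star_smul, hstar11, star_mul', Complex.star_def, map_mul,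
      Complex.conj_I]
    match_scalars <;>
      first
        | ring1
        | (simp [hκ, map_add, map_mul, map_div₀, map_ofNat, Complex.conj_ofReal, Complex.conj_I, Complex.ext_iff]; try ring1)
  have hkeyM : (-κ) • (star T) + (-(starRingEnd ℂ) κ) • T + (γ : ℂ) • (1 : H →L[ℂ] H) = 0 := by
    rw [hT]
    simp only [star_add, star_one, star_smul, hstar11, star_mul', Complex.star_def, map_mul,
      Complex.conj_I]
    match_scalars <;>
      first
        | ring1
        | (simp [hκ, map_add, map_mul, map_div₀, map_ofNat, Complex.conj_ofReal, Complex.conj_I, Complex.ext_iff]; try ring1)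
  -- sandwiched identities
  have hNs : star T * ((-Complex.I) • S + Complex.I • star S
      + (γ : ℂ) • (star S * E₁₁ * S)) * T = 0 := by
    simp only [add_mul, mul_add, smul_mul_assoc, mul_smul_comm, mul_assoc, hST, mul_one, hcancel]
    exact hkeyN
  have hN : (-Complex.I) • S + Complex.I • star S + (γ : ℂ) • (star S * E₁₁ * S) = 0 := by
    have h := congrArg (fun x => star S * x * S) hNs
    simp only [mul_zero, zero_mul] at h
    rw [← h]
    simp only [mul_assoc, hTS, mul_one, hcancel2]
  have hMs : star T * ((-κ) • S + (-(starRingEnd ℂ) κ) • star S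
      + (γ : ℂ) • (star S * S)) * T = 0 := by
    simp only [add_mul, mul_add, smul_mul_assoc, mul_smul_comm, mul_assoc, hST, mul_one, hTS',
      hcancel]
    exact hkeyM
  have hM : (-κ) • S + (-(starRingEnd ℂ) κ) • star S + (γ : ℂ) • (star S * S) = 0 := by
    have h := congrArg (fun x => star S * x * S) hMs
    simp only [mul_zero, zero_mul] at h
    rw [← h]
    simp only [mul_assoc, hTS, mul_one, hcancel2]
  refine ⟨?_, ?_, ?_, ?_⟩
  · have e1 : L₀₀ + ContinuousLinearMap.adjoint L₀₀
        + (γ : ℂ) • (ContinuousLinearMap.adjoint L₁₀ * L₁₀)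
        = E₀₁ * ((-κ) • S + (-(starRingEnd ℂ) κ) • star S + (γ : ℂ) • (star S * S)) * E₁₀ := by
      simp only [← ContinuousLinearMap.star_eq_adjoint, hL₀₀, hL₁₀, star_sub, star_add, star_smul, star_mul,
        hstar00, hstar10, hstar01, Complex.star_def, map_neg, Complex.conj_I, neg_neg,
        mul_add, add_mul, smul_mul_assoc, mul_smul_comm, smul_smul, mul_assoc, sub_eq_add_neg,
        neg_smul, star_neg, mul_neg, neg_mul, smul_neg, neg_neg]
      match_scalars <;>
        first
          | ring1
          | (simp [hκ, map_add, map_mul, map_div₀, map_ofNat, Complex.conj_ofReal, Complex.conj_I, Complex.ext_iff]; try ring1)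
    rw [e1, hM, mul_zero, zero_mul]
  · have e2 : L₀₁ + ContinuousLinearMap.adjoint L₁₀
        + (γ : ℂ) • (ContinuousLinearMap.adjoint L₁₀ * L₁₁)
        = E₀₁ * ((-Complex.I) • S + Complex.I • star S + (γ : ℂ) • (star S * E₁₁ * S)) := by
      simp only [← ContinuousLinearMap.star_eq_adjoint, hL₀₁, hL₁₀, hL₁₁, star_smul, star_mul,
        hstar11, hstar10, hstar01, Complex.star_def, map_neg, Complex.conj_I, neg_neg,
        mul_add, add_mul, smul_mul_assoc, mul_smul_comm, smul_smul, mul_assoc, neg_smul, mul_neg, neg_mul, smul_neg, neg_neg, star_neg]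
      match_scalars <;>
        first
          | ring1
          | (simp [hκ, map_add, map_mul, map_div₀, map_ofNat, Complex.conj_ofReal, Complex.conj_I, Complex.ext_iff]; try ring1)
    rw [e2, hN, mul_zero]
  · have e3 : L₁₀ + ContinuousLinearMap.adjoint L₀₁
        + (γ : ℂ) • (ContinuousLinearMap.adjoint L₁₁ * L₁₀)
        = ((-Complex.I) • S + Complex.I • star S + (γ : ℂ) • (star S * E₁₁ * S)) * E₁₀ := by
      simp only [← ContinuousLinearMap.star_eq_adjoint, hL₀₁, hL₁₀, hL₁₁, star_smul, star_mul,
        hstar11, hstar10, hstar01, Complex.star_def, map_neg, Complex.conj_I, neg_neg,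
        mul_add, add_mul, smul_mul_assoc, mul_smul_comm, smul_smul, mul_assoc, neg_smul, mul_neg, neg_mul, smul_neg, neg_neg, star_neg]
      match_scalars <;>
        first
          | ring1
          | (simp [hκ, map_add, map_mul, map_div₀, map_ofNat, Complex.conj_ofReal, Complex.conj_I, Complex.ext_iff]; try ring1)
    rw [e3, hN, zero_mul]
  · have e4 : L₁₁ + ContinuousLinearMap.adjoint L₁₁
        + (γ : ℂ) • (ContinuousLinearMap.adjoint L₁₁ * L₁₁)
        = ((-Complex.I) • S + Complex.I • star S + (γ : ℂ) • (star S * E₁₁ * S)) * E₁₁ := by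
      simp only [← ContinuousLinearMap.star_eq_adjoint, hL₁₁, star_smul, star_mul,
        hstar11, Complex.star_def, map_neg, Complex.conj_I, neg_neg,
        mul_add, add_mul, smul_mul_assoc, mul_smul_comm, smul_smul, mul_assoc, neg_smul, mul_neg, neg_mul, smul_neg, neg_neg, star_neg, hcomm, hcomm', hcP, hcP']
      match_scalars <;>
        first
          | ring1
          | (simp [hκ, map_add, map_mul, map_div₀, map_ofNat, Complex.conj_ofReal, Complex.conj_I, Complex.ext_iff]; try ring1)
    rw [e4, hN, zero_mul]
end

section
/- Let H be a complex Hilbert space, γ > 0, and let L₀₀, L₀₁, L₁₀, L₁₁ be bounded operators satisfying the isometry relations L₀₀ + L₀₀† + γL₁₀†L₁₀ = 0, L₀₁ + L₁₀† + γL₁₀†L₁₁ = 0, L₁₀ + L₀₁† + γL₁₁†L₁₀ = 0, L₁₁ + L₁₁† + γL₁₁†L₁₁ = 0, and additionally satisfying (1 + γL₁₁)(1 + γL₁₁)† = 1. Then W := 1 + γL₁₁ is unitary (W†W = 1 = WW†), the operator H₀ := i(L₀₀ + (γ/2)L₁₀†L₁₀) is self-adjoint, and one has L₀₁ = −L₁₀†W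 and L₀₀ = −(γ/2)L₁₀†L₁₀ − iH₀. -/
/-- (Converse parametrization.)  If bounded operators
`L₀₀, L₀₁, L₁₀, L₁₁` satisfy the isometry relations `L_ij + L_ji† + γ L_1i† L_1j = 0`
and moreover `(1 + γL₁₁)(1 + γL₁₁)† = 1`, then `W := 1 + γL₁₁` is unitary,
`H₀ := i(L₀₀ + (γ/2)L₁₀†L₁₀)` is self-adjoint, `L₀₁ = -L₁₀†W` and
`L₀₀ = -(γ/2)L₁₀†L₁₀ - iH₀`. -/
theorem isometry_relations_imply_HP_parametrization
    {H : Type*} [NormedAddCommGroup H] [InnerProductSpace ℂ H] [CompleteSpace H]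
    (γ : ℝ) (hγ : 0 < γ)
    (L₀₀ L₀₁ L₁₀ L₁₁ : H →L[ℂ] H)
    (h₀₀ : L₀₀ + ContinuousLinearMap.adjoint L₀₀
        + (γ : ℂ) • (ContinuousLinearMap.adjoint L₁₀ * L₁₀) = 0)
    (h₀₁ : L₀₁ + ContinuousLinearMap.adjoint L₁₀
        + (γ : ℂ) • (ContinuousLinearMap.adjoint L₁₀ * L₁₁) = 0)
    (h₁₀ : L₁₀ + ContinuousLinearMap.adjoint L₀₁
        + (γ : ℂ) • (ContinuousLinearMap.adjoint L₁₁ * L₁₀) = 0)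
    (h₁₁ : L₁₁ + ContinuousLinearMap.adjoint L₁₁
        + (γ : ℂ) • (ContinuousLinearMap.adjoint L₁₁ * L₁₁) = 0)
    (W : H →L[ℂ] H) (hW : W = 1 + (γ : ℂ) • L₁₁)
    (hWco : W * ContinuousLinearMap.adjoint W = 1)
    (H₀ : H →L[ℂ] H)
    (hH₀ : H₀ = Complex.I •
        (L₀₀ + ((γ : ℂ) / 2) • (ContinuousLinearMap.adjoint L₁₀ * L₁₀))) :
    (ContinuousLinearMap.adjoint W * W = 1 ∧ W * ContinuousLinearMap.adjoint W = 1) ∧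
    ContinuousLinearMap.adjoint H₀ = H₀ ∧
    L₀₁ = -(ContinuousLinearMap.adjoint L₁₀ * W) ∧
    L₀₀ = -(((γ : ℂ) / 2) • (ContinuousLinearMap.adjoint L₁₀ * L₁₀))
        - Complex.I • H₀ := by
  simp only [← ContinuousLinearMap.star_eq_adjoint] at *
  have hWadj : star W = 1 + (γ : ℂ) • star L₁₁ := by
    rw [hW]
    simp [star_smul, Complex.star_def, Complex.conj_ofReal]
  have hiso : star W * W = 1 := by
    have e : star W * W
        = 1 + (γ : ℂ) • (L₁₁ + star L₁₁ + (γ : ℂ) • (star L₁₁ * L₁₁)) := by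
      rw [hWadj, hW]
      simp only [mul_add, add_mul, one_mul, mul_one, smul_add, smul_smul,
        smul_mul_assoc, mul_smul_comm]
      abel
    rw [e, h₁₁, smul_zero, add_zero]
  have hadjL₀₀ : star L₀₀
      = -L₀₀ - (γ : ℂ) • (star L₁₀ * L₁₀) := by
    have h := h₀₀
    rw [add_assoc] at h
    linear_combination (norm := abel) h
  have hT : star (star L₁₀ * L₁₀) = star L₁₀ * L₁₀ := by
    rw [star_mul, star_star]
  have hH₀sa : star H₀ = H₀ := by
    rw [hH₀, star_smul, star_add, star_smul, hadjL₀₀, hT]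
    have hc : star ((γ : ℂ) / 2) = (γ : ℂ) / 2 := by
      simp [Complex.star_def, Complex.conj_ofReal]
    rw [hc, Complex.star_def, Complex.conj_I]
    module
  have hL₀₁ : L₀₁ = -(star L₁₀ * W) := by
    rw [hW]
    have h := h₀₁
    rw [add_assoc] at h
    have h2 : L₀₁ = -(star L₁₀ + (γ : ℂ) • (star L₁₀ * L₁₁)) := by
      linear_combination (norm := abel) h
    rw [h2]
    simp only [mul_add, mul_one, mul_smul_comm]
  have hL₀₀ : L₀₀ = -(((γ : ℂ) / 2) • (star L₁₀ * L₁₀)) - Complex.I • H₀ := by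
    rw [hH₀, smul_smul, Complex.I_mul_I, neg_one_smul]
    module
  exact ⟨⟨hiso, hWco⟩, hH₀sa, hL₀₁, hL₀₀⟩
end

section
/- Let A be a unital C*-algebra over ℂ. Fix γ > 0, σ ∈ ℝ, κ := γ/2 + iσ, n ∈ ℝ, m, α ∈ ℂ, and C, F ∈ A with F self-adjoint. Define G := i·(F + conj(α)•C + α•C†) + κ•((n+1)•C†C + n•CC† + conj(m)•CC + m•C†C†) and, for X ∈ A, L(X) := γ•((n+1)•C†XC + n•CXC† + conj(m)•CXC + m•C†XC†) − X·G − G†·X, where X† := star X. Then for every X ∈ A, the dissipation satisfies L((star X)·X) − L(star X)·X − (star X)·L(X) = γ•((n+1)•[X,C]†[X,C] + n•[X,C†]†[X,C†] + conj(m)•[X,C†]†[X,C] + m•[X,C]†[X,C†]), where [X,Y] := X·Y − Y·X. -/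
/-- (Paper, eqs. (27)–(28).)  The dissipation of the Gaussian
Lindblad-type generator `L` satisfies
`L(X†X) - L(X†)X - X†L(X) = γ((n+1)[X,C]†[X,C] + n[X,C†]†[X,C†] + m̄[X,C†]†[X,C] + m[X,C]†[X,C†])`,
where `[X,Y] := XY - YX`. -/
theorem gaussian_lindblad_generator_dissipation
    {A : Type*} [CStarAlgebra A]
    (γ σ : ℝ) (hγ : 0 < γ) (κ : ℂ) (hκ : κ = γ / 2 + Complex.I * σ)
    (n : ℝ) (m α : ℂ) (C F : A) (hF : star F = F)
    (G : A)
    (hG : G = Complex.I • (F + (starRingEnd ℂ α) • C + α • star C)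
        + κ • (((n : ℂ) + 1) • (star C * C) + (n : ℂ) • (C * star C)
            + (starRingEnd ℂ m) • (C * C) + m • (star C * star C)))
    (L : A → A)
    (hL : ∀ X : A, L X = (γ : ℂ) • (((n : ℂ) + 1) • (star C * X * C)
            + (n : ℂ) • (C * X * star C) + (starRingEnd ℂ m) • (C * X * C)
            + m • (star C * X * star C))
        - X * G - star G * X) :
    ∀ X : A,
      L (star X * X) - L (star X) * X - star X * L X
        = (γ : ℂ) • (((n : ℂ) + 1) • (star (X * C - C * X) * (X * C - C * X))
            + (n : ℂ) • (star (X * star C - star C * X) * (X * star C - star C * X))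
            + (starRingEnd ℂ m) • (star (X * star C - star C * X) * (X * C - C * X))
            + m • (star (X * C - C * X) * (X * star C - star C * X))) := by
  intro X
  subst hκ hG
  simp only [hL, star_add, star_smul, star_mul, star_star, star_sub, hF,
    Complex.star_def, map_add, map_mul, map_one, Complex.conj_conj,
    Complex.conj_I, Complex.conj_ofReal, map_div₀, map_ofNat,
    mul_add, add_mul, mul_sub, sub_mul, smul_add, smul_sub,
    smul_mul_assoc, mul_smul_comm, smul_smul, mul_assoc]
  module
end

section
/- Let A be a unital C*-algebra over ℂ, let a, b ∈ A, let γ > 0, n ∈ ℝ with n ≥ 0, and m ∈ ℂ with |m|² ≤ n·(n+1). Then the element γ•((n+1)•(star a)·a + n•(star b)·b + conj(m)•(star b)·a + m•(star a)·b) is positive in A. -/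
/-- In a unital C*-algebra, for `γ > 0`, `n ≥ 0` and `|m|² ≤ n(n+1)`,
the Gaussian quadratic form `γ((n+1)a†a + nb†b + m̄b†a + ma†b)` is positive. -/
theorem gaussian_quadratic_form_positive
    {A : Type*} [CStarAlgebra A] [PartialOrder A] [StarOrderedRing A]
    (a b : A) (γ : ℝ) (hγ : 0 < γ) (n : ℝ) (hn : 0 ≤ n)
    (m : ℂ) (hm : ‖m‖ ^ 2 ≤ n * (n + 1)) :
    0 ≤ (γ : ℂ) • (((n : ℂ) + 1) • (star a * a) + (n : ℂ) • (star b * b)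
        + (starRingEnd ℂ m) • (star b * a) + m • (star a * b)) := by
  have hn1 : (0:ℝ) < n + 1 := by linarith
  set s := Real.sqrt (n+1) with hs
  set t := Real.sqrt γ with ht
  have hs2 : s * s = n + 1 := Real.mul_self_sqrt hn1.le
  have ht2 : t * t = γ := Real.mul_self_sqrt hγ.le
  have hspos : 0 < s := Real.sqrt_pos.2 hn1
  have hsne : s ≠ 0 := hspos.ne'
  have hcnn : 0 ≤ γ * (n - ‖m‖^2/(n+1)) := by
    apply mul_nonneg hγ.le
    rw [sub_nonneg, div_le_iff₀ hn1]
    linarith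
  set c := Real.sqrt (γ * (n - ‖m‖^2/(n+1))) with hc
  have hc2 : c * c = γ * (n - ‖m‖^2/(n+1)) := Real.mul_self_sqrt hcnn
  obtain ⟨p, hp⟩ : ∃ x : ℂ, x = ((t*s : ℝ) : ℂ) := ⟨_, rfl⟩
  obtain ⟨q, hq⟩ : ∃ x : ℂ, x = ((t/s : ℝ) : ℂ) * m := ⟨_, rfl⟩
  obtain ⟨r, hr⟩ : ∃ x : ℂ, x = ((c : ℝ) : ℂ) := ⟨_, rfl⟩
  have h1r : t*s*(t*s) = γ*(n+1) := by nlinarith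
  have h1 : (starRingEnd ℂ) p * p = (γ : ℂ) * ((n:ℂ)+1) := by
    rw [hp, Complex.conj_ofReal]; exact_mod_cast h1r
  have hratio : (t/s)*(t*s) = γ := by field_simp; nlinarith
  have h2 : (starRingEnd ℂ) q * p = (γ : ℂ) * (starRingEnd ℂ m) := by
    rw [hq, hp]; simp only [map_mul, Complex.conj_ofReal]
    rw [mul_right_comm, ← Complex.ofReal_mul, hratio]
  have h3 : (starRingEnd ℂ) p * q = (γ : ℂ) * m := by
    rw [hq, hp, Complex.conj_ofReal, ← mul_assoc, ← Complex.ofReal_mul, mul_comm (t*s), hratio]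
  have hmm : (starRingEnd ℂ m) * m = ((‖m‖^2 : ℝ) : ℂ) := by
    rw [mul_comm, Complex.mul_conj']; norm_cast
  have hratio2 : (t/s)*(t/s) = γ/(n+1) := by
    rw [div_mul_div_comm, ht2, hs2]
  have h4 : (starRingEnd ℂ) q * q + (starRingEnd ℂ) r * r = (γ : ℂ) * (n:ℂ) := by
    rw [hq, hr]; simp only [map_mul, Complex.conj_ofReal]
    calc ((t/s : ℝ):ℂ) * (starRingEnd ℂ m) * (((t/s : ℝ):ℂ) * m) + (c:ℂ)*(c:ℂ)
        = (((t/s)*(t/s) : ℝ):ℂ) * ((starRingEnd ℂ m) * m) + ((c*c : ℝ):ℂ) := by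
          push_cast; ring
      _ = (((γ/(n+1)) : ℝ):ℂ) * ((‖m‖^2 : ℝ):ℂ) + ((γ * (n - ‖m‖^2/(n+1)) : ℝ):ℂ) := by
          rw [hratio2, hmm, hc2]
      _ = (γ : ℂ) * (n:ℂ) := by
          rw [← Complex.ofReal_mul, ← Complex.ofReal_add, ← Complex.ofReal_mul]
          norm_cast
          field_simp
          ring
  have key : (γ : ℂ) • (((n : ℂ) + 1) • (star a * a) + (n : ℂ) • (star b * b)
        + (starRingEnd ℂ m) • (star b * a) + m • (star a * b))
      = star (p • a + q • b) * (p • a + q • b) + star (r • b) * (r • b) := by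
    simp only [star_add, star_smul, add_mul, mul_add, smul_mul_assoc, mul_smul_comm,
      smul_add, smul_smul, RCLike.star_def]
    match_scalars
    all_goals first
      | linear_combination -h1 | linear_combination -h2
      | linear_combination -h3 | linear_combination -h4
  rw [key]
  exact add_nonneg (star_mul_self_nonneg _) (star_mul_self_nonneg _)
end
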